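/- Let Ω be a real symmetric positive definite matrix with block decomposition Ω = Ω_L + Ω_D + Ω_U into block-strictly-lower-triangular, block-diagonal, and block-strictly-upper-triangular parts (with respect to q×q blocks), and let C = Ω⁻¹ and G = −(Ω_L + Ω_D)⁻¹ Ω_U be the Gauss–Seidel operator. Then C = G C Gᵀ + (Ω_L + Ω_D)⁻¹ Ω_D (Ω_L + Ω_D)⁻ᵀ. -/

import Mathlib

open Matrix
/-- Block strictly-lower-triangular part (with respect to `q × q` blocks). -/
def Matrix.blkLower {m q : ℕ} (Ω : Matrix (Fin m × Fin q) (Fin m × Fin q) ℝ) :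
    Matrix (Fin m × Fin q) (Fin m × Fin q) ℝ :=
  Matrix.of fun p r => if r.1 < p.1 then Ω p r else 0

/-- Block-diagonal part (with respect to `q × q` blocks). -/
def Matrix.blkDiag {m q : ℕ} (Ω : Matrix (Fin m × Fin q) (Fin m × Fin q) ℝ) :
    Matrix (Fin m × Fin q) (Fin m × Fin q) ℝ :=
  Matrix.of fun p r => if p.1 = r.1 then Ω p r else 0

/-- Block strictly-upper-triangular part (with respect to `q × q` blocks). -/
def Matrix.blkUpper {m q : ℕ} (Ω : Matrix (Fin m × Fin q) (Fin m × Fin q) ℝ) :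
    Matrix (Fin m × Fin q) (Fin m × Fin q) ℝ :=
  Matrix.of fun p r => if p.1 < r.1 then Ω p r else 0

/-- for a symmetric positive definite `Ω` with block decomposition
`Ω = Ω_L + Ω_D + Ω_U` and `C = Ω⁻¹`, the Gauss–Seidel operator
`G = -(Ω_L + Ω_D)⁻¹ Ω_U` satisfies `C = G C Gᵀ + (Ω_L + Ω_D)⁻¹ Ω_D (Ω_L + Ω_D)⁻ᵀ`. -/
theorem gaussSeidel_covariance_identity
    {m q : ℕ} (Ω : Matrix (Fin m × Fin q) (Fin m × Fin q) ℝ) (hΩ : Ω.PosDef)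
    (hInv : IsUnit (Ω.blkLower + Ω.blkDiag)) :
    Ω⁻¹ =
      (-((Ω.blkLower + Ω.blkDiag)⁻¹ * Ω.blkUpper)) * Ω⁻¹ *
          (-((Ω.blkLower + Ω.blkDiag)⁻¹ * Ω.blkUpper))ᵀ +
        (Ω.blkLower + Ω.blkDiag)⁻¹ * Ω.blkDiag *
          ((Ω.blkLower + Ω.blkDiag)⁻¹)ᵀ := by
  have hΩsym : Ωᵀ = Ω := by
    have h := hΩ.1.eq
    rw [← Matrix.conjTranspose_eq_transpose_of_trivial]; exact h
  -- decomposition Ω = L + D + U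
  have hdecomp : Ω.blkLower + Ω.blkDiag + Ω.blkUpper = Ω := by
    ext p r
    simp only [Matrix.add_apply, Matrix.blkLower, Matrix.blkDiag, Matrix.blkUpper, Matrix.of_apply]
    rcases lt_trichotomy p.1 r.1 with h | h | h
    · simp [h, h.ne, not_lt_of_gt h]
    · simp [h, lt_irrefl]
    · simp [h, h.ne', not_lt_of_gt h]
  -- transpose relations
  have hLT : (Ω.blkLower)ᵀ = Ω.blkUpper := by
    ext p r
    have h := congrFun (congrFun hΩsym p) r
    simp only [Matrix.transpose_apply] at h
    simp only [Matrix.transpose_apply, Matrix.blkLower, Matrix.blkUpper, Matrix.of_apply]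
    rcases lt_or_ge p.1 r.1 with hlt | hle
    · simp [hlt, h]
    · simp [not_lt_of_ge hle]
  have hDT : (Ω.blkDiag)ᵀ = Ω.blkDiag := by
    ext p r
    have h := congrFun (congrFun hΩsym p) r
    simp only [Matrix.transpose_apply] at h
    simp only [Matrix.transpose_apply, Matrix.blkDiag, Matrix.of_apply]
    rcases eq_or_ne p.1 r.1 with he | he
    · rw [if_pos he.symm, if_pos he, h]
    · rw [if_neg (Ne.symm he), if_neg he]
  set L := Ω.blkLower with hL
  set D := Ω.blkDiag with hDd
  set U := Ω.blkUpper with hUu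
  set M := L + D with hM
  have hU : U = Ω - M := eq_sub_of_add_eq' hdecomp
  have hMT : Mᵀ = U + D := by rw [hM, Matrix.transpose_add, hLT, hDT]
  have hD : D = M + Mᵀ - Ω := by
    rw [hMT, ← hdecomp]
    abel
  -- invertibility facts
  have hMdet : IsUnit M.det := (Matrix.isUnit_iff_isUnit_det M).mp hInv
  have hΩdet : IsUnit Ω.det := (Matrix.isUnit_iff_isUnit_det Ω).mp hΩ.isUnit
  have hMTdet : IsUnit Mᵀ.det := by rwa [Matrix.det_transpose]
  have hAM : M⁻¹ * M = 1 := Matrix.nonsing_inv_mul M hMdet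
  have hMA : M * M⁻¹ = 1 := Matrix.mul_nonsing_inv M hMdet
  have hBΩ : Ω⁻¹ * Ω = 1 := Matrix.nonsing_inv_mul Ω hΩdet
  have hΩB : Ω * Ω⁻¹ = 1 := Matrix.mul_nonsing_inv Ω hΩdet
  have hTA : (Mᵀ)⁻¹ * Mᵀ = 1 := Matrix.nonsing_inv_mul Mᵀ hMTdet
  have hAT : Mᵀ * (Mᵀ)⁻¹ = 1 := Matrix.mul_nonsing_inv Mᵀ hMTdet
  have c1 : ∀ X, Ω⁻¹ * (Ω * X) = X := fun X => by rw [← Matrix.mul_assoc, hBΩ, Matrix.one_mul]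
  have c2 : ∀ X, Ω * (Ω⁻¹ * X) = X := fun X => by rw [← Matrix.mul_assoc, hΩB, Matrix.one_mul]
  have c3 : ∀ X, M⁻¹ * (M * X) = X := fun X => by rw [← Matrix.mul_assoc, hAM, Matrix.one_mul]
  have c4 : ∀ X, M * (M⁻¹ * X) = X := fun X => by rw [← Matrix.mul_assoc, hMA, Matrix.one_mul]
  have c5 : ∀ X, Mᵀ * ((Mᵀ)⁻¹ * X) = X := fun X => by
    rw [← Matrix.mul_assoc, hAT, Matrix.one_mul]
  have c6 : ∀ X, (Mᵀ)⁻¹ * (Mᵀ * X) = X := fun X => by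
    rw [← Matrix.mul_assoc, hTA, Matrix.one_mul]
  rw [hU, hD]
  simp only [Matrix.transpose_neg, Matrix.transpose_mul, Matrix.transpose_sub, hΩsym,
    Matrix.transpose_nonsing_inv, Matrix.neg_mul, Matrix.mul_neg, neg_neg,
    Matrix.mul_sub, Matrix.sub_mul, Matrix.mul_add, Matrix.add_mul, Matrix.mul_assoc,
    hAT, hTA, hΩB, hBΩ, hAM, hMA, Matrix.mul_one, Matrix.one_mul, Matrix.transpose_one,
    c1, c2, c3, c4, c5, c6]
  abel
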